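/- Let R be a commutative ring and let f : M → N and g : N → L be R-linear maps such that the modules ker f, L/im g, (im f + ker g)/im f, and (im f + ker g)/ker g are all Q-torsion (i.e., 0 → M → N → L → 0 is a τ_q-exact sequence). If N is τ_q-finitely presented, then L is τ_q-finitely presented if and only if M is τ_q-finitely generated. -/

import Mathlib

open Polynomial TensorProduct

universe u v

/-- An ideal is *semi-regular* if it contains a finitely generated dense subideal
(an ideal is *dense* if its annihilator is zero). -/
def Ideal.IsSemiregular {R : Type*} [CommRing R] (I : Ideal R) : Prop :=
  ∃ J : Ideal R, J ≤ I ∧ J.FG ∧ Submodule.annihilator J = ⊥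

/-- A module is *Q-torsion* if every element is annihilated by some finitely
generated semi-regular ideal. -/
def IsQTorsion (R : Type*) (M : Type*) [CommRing R] [AddCommGroup M] [Module R M] : Prop :=
  ∀ m : M, ∃ I : Ideal R, I.FG ∧ I.IsSemiregular ∧ ∀ a ∈ I, a • m = 0

/-- A module is *τ_q-finitely generated* if it has a finitely generated submodule
with Q-torsion quotient. -/
def IsTauQFG (R : Type u) (M : Type v) [CommRing R] [AddCommGroup M] [Module R M] : Prop :=
  ∃ N : Submodule R M, N.FG ∧ IsQTorsion R (M ⧸ N)

/-- A module is *τ_q-finitely presented* if it receives a linear map from a finitely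
presented module with Q-torsion kernel and cokernel. -/
def IsTauQFP (R : Type u) (M : Type v) [CommRing R] [AddCommGroup M] [Module R M] : Prop :=
  ∃ (N : Type v) (_ : AddCommGroup N) (_ : Module R N) (f : N →ₗ[R] M),
    Module.FinitePresentation R N ∧ IsQTorsion R (LinearMap.ker f) ∧
      IsQTorsion R (M ⧸ LinearMap.range f)

section Aux

variable {R : Type u} [CommRing R]

/-- A finitely generated semiregular ideal. -/
def QIdl (I : Ideal R) : Prop := I.FG ∧ I.IsSemiregular

lemma qidl_top : QIdl (⊤ : Ideal R) := by
  refine ⟨⟨{1}, by simpa using Ideal.span_singleton_one⟩,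
    ⟨⊤, le_rfl, ⟨{1}, by simpa using Ideal.span_singleton_one⟩, ?_⟩⟩
  rw [eq_bot_iff]
  intro a ha
  have := Submodule.mem_annihilator.mp ha 1 Submodule.mem_top
  simpa using this

lemma QIdl.mul {I J : Ideal R} (hI : QIdl I) (hJ : QIdl J) : QIdl (I * J) := by
  obtain ⟨hIfg, I', hI'I, hI'fg, hI'ann⟩ := hI
  obtain ⟨hJfg, J', hJ'J, hJ'fg, hJ'ann⟩ := hJ
  refine ⟨Submodule.FG.mul hIfg hJfg, I' * J', Ideal.mul_mono hI'I hJ'J,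
    Submodule.FG.mul hI'fg hJ'fg, ?_⟩
  rw [eq_bot_iff]
  intro a ha
  rw [Submodule.mem_bot]
  have haI : a ∈ Submodule.annihilator I' := by
    rw [Submodule.mem_annihilator]
    intro x hx
    have hax : a * x ∈ Submodule.annihilator J' := by
      rw [Submodule.mem_annihilator]
      intro y hy
      have := Submodule.mem_annihilator.mp ha (x * y) (Ideal.mul_mem_mul hx hy)
      simpa [smul_eq_mul, mul_assoc] using this
    rw [hJ'ann, Submodule.mem_bot] at hax
    simpa [smul_eq_mul] using hax
  rw [hI'ann, Submodule.mem_bot] at haI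
  exact haI

lemma qidl_prod {ι : Type*} (s : Finset ι) (f : ι → Ideal R) (h : ∀ i ∈ s, QIdl (f i)) :
    QIdl (∏ i ∈ s, f i) := by
  refine Finset.prod_induction f QIdl (fun a b ha hb => ha.mul hb) ?_ h
  simpa [Ideal.one_eq_top] using (qidl_top (R := R))

lemma prod_le_of_mem {ι : Type*} {s : Finset ι} {f : ι → Ideal R} {i : ι} (hi : i ∈ s) :
    (∏ j ∈ s, f j) ≤ f i := by
  classical
  rw [← Finset.mul_prod_erase s f hi]
  exact Ideal.mul_le.2 fun _ hr _ _ => Ideal.mul_mem_right _ _ hr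

variable {X : Type*} [AddCommGroup X] [Module R X] {Y : Type*} [AddCommGroup Y] [Module R Y]

/-- `S` is Q-torsion relative to `F`: every element of `S` is pushed into `F` by some
finitely generated semiregular ideal. -/
def TQT (F S : Submodule R X) : Prop :=
  ∀ x ∈ S, ∃ I : Ideal R, QIdl I ∧ ∀ a ∈ I, a • x ∈ F

lemma TQT.mono {F F' S S' : Submodule R X} (hF : F ≤ F') (hS : S' ≤ S) (h : TQT F S) :
    TQT F' S' := by
  intro x hx
  obtain ⟨I, hIQ, hI⟩ := h x (hS hx)
  exact ⟨I, hIQ, fun a ha => hF (hI a ha)⟩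

lemma TQT.trans {F S W : Submodule R X} (h1 : TQT F S) (h2 : TQT S W) : TQT F W := by
  classical
  intro x hx
  obtain ⟨I, hIQ, hIS⟩ := h2 x hx
  obtain ⟨t, ht⟩ := hIQ.1
  have key : ∀ a : R, ∃ Ja : Ideal R, QIdl Ja ∧ (a ∈ I → ∀ c ∈ Ja, c • (a • x) ∈ F) := by
    intro a
    by_cases ha : a ∈ I
    · obtain ⟨Ja, hJaQ, hJa⟩ := h1 (a • x) (hIS a ha)
      exact ⟨Ja, hJaQ, fun _ c hc => hJa c hc⟩
    · exact ⟨⊤, qidl_top, fun h => absurd h ha⟩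
  choose J hJQ hJ using key
  refine ⟨(∏ a ∈ t, J a) * I, (qidl_prod t J fun a _ => hJQ a).mul hIQ, ?_⟩
  have hle : (∏ a ∈ t, J a) * I ≤ Submodule.comap (LinearMap.toSpanSingleton R X x) F := by
    rw [Ideal.mul_le]
    intro r hr s hs
    have hsub : Ideal.span (↑t : Set R) ≤
        Submodule.comap (LinearMap.toSpanSingleton R X (r • x)) F := by
      rw [Ideal.span_le]
      intro a hat
      simp only [SetLike.mem_coe, Submodule.mem_comap, LinearMap.toSpanSingleton_apply]
      have haI : a ∈ I := ht ▸ Ideal.subset_span hat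
      have := hJ a haI r (prod_le_of_mem hat hr)
      rwa [smul_comm] at this
    rw [← ht] at hs
    have := hsub hs
    simp only [Submodule.mem_comap, LinearMap.toSpanSingleton_apply] at this ⊢
    rwa [mul_comm, mul_smul]
  intro a ha
  simpa using hle ha

lemma TQT.map {F S : Submodule R X} (φ : X →ₗ[R] Y) (h : TQT F S) :
    TQT (F.map φ) (S.map φ) := by
  rintro y ⟨x, hx, rfl⟩
  obtain ⟨I, hIQ, hI⟩ := h x hx
  exact ⟨I, hIQ, fun a ha => ⟨a • x, hI a ha, map_smul φ a x⟩⟩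

lemma TQT.comap {F S : Submodule R Y} (φ : X →ₗ[R] Y) (h : TQT F S) :
    TQT (F.comap φ) (S.comap φ) := by
  intro x hx
  obtain ⟨I, hIQ, hI⟩ := h (φ x) hx
  exact ⟨I, hIQ, fun a ha => by
    simp only [Submodule.mem_comap, map_smul]
    exact hI a ha⟩

lemma tqt_top_iff {S : Submodule R X} : TQT S ⊤ ↔ IsQTorsion R (X ⧸ S) := by
  constructor
  · intro h m
    obtain ⟨x, rfl⟩ := Submodule.mkQ_surjective S m
    obtain ⟨I, hIQ, hI⟩ := h x Submodule.mem_top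
    refine ⟨I, hIQ.1, hIQ.2, fun a ha => ?_⟩
    rw [← map_smul, Submodule.mkQ_apply, Submodule.Quotient.mk_eq_zero]
    exact hI a ha
  · intro h x _
    obtain ⟨I, hfg, hsr, hI⟩ := h (Submodule.Quotient.mk x)
    refine ⟨I, ⟨hfg, hsr⟩, fun a ha => ?_⟩
    have := hI a ha
    rwa [← Submodule.Quotient.mk_smul, Submodule.Quotient.mk_eq_zero] at this

lemma tqt_bot_iff {S : Submodule R X} : TQT (⊥ : Submodule R X) S ↔ IsQTorsion R ↥S := by
  constructor
  · intro h m
    obtain ⟨I, hIQ, hI⟩ := h m.1 m.2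
    refine ⟨I, hIQ.1, hIQ.2, fun a ha => ?_⟩
    have := hI a ha
    rw [Submodule.mem_bot] at this
    exact Subtype.ext (by simpa using this)
  · intro h x hx
    obtain ⟨I, hfg, hsr, hI⟩ := h ⟨x, hx⟩
    refine ⟨I, ⟨hfg, hsr⟩, fun a ha => ?_⟩
    rw [Submodule.mem_bot]
    have := congrArg (Submodule.subtype S) (hI a ha)
    simpa using this

lemma tqt_of_subQuot {W F : Submodule R X}
    (h : IsQTorsion R (↥W ⧸ Submodule.comap W.subtype F)) : TQT F W := by
  intro x hx
  obtain ⟨I, hfg, hsr, hI⟩ := h (Submodule.Quotient.mk ⟨x, hx⟩)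
  refine ⟨I, ⟨hfg, hsr⟩, fun a ha => ?_⟩
  have := hI a ha
  rw [← Submodule.Quotient.mk_smul, Submodule.Quotient.mk_eq_zero, Submodule.mem_comap] at this
  simpa using this

end Aux

section Aux2

variable {R : Type u} [CommRing R]
variable {X : Type*} [AddCommGroup X] [Module R X] {Y : Type*} [AddCommGroup Y] [Module R Y]

/-- `S` is τ_q-finitely generated (as a submodule of the ambient module). -/
def TQFG (S : Submodule R X) : Prop := ∃ F : Submodule R X, F ≤ S ∧ F.FG ∧ TQT F S

lemma tqfg_top_iff : TQFG (⊤ : Submodule R X) ↔ IsTauQFG R X := by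
  constructor
  · rintro ⟨F, -, hFfg, hF⟩
    exact ⟨F, hFfg, tqt_top_iff.mp hF⟩
  · rintro ⟨F, hFfg, hF⟩
    exact ⟨F, le_top, hFfg, tqt_top_iff.mpr hF⟩

lemma TQFG.map {S : Submodule R X} (φ : X →ₗ[R] Y) (h : TQFG S) : TQFG (S.map φ) := by
  obtain ⟨F, hFS, hFfg, hF⟩ := h
  exact ⟨F.map φ, Submodule.map_mono hFS, Submodule.FG.map φ hFfg, hF.map φ⟩

lemma TQFG.up {S W : Submodule R X} (hSW : S ≤ W) (h : TQFG S) (ht : TQT S W) : TQFG W := by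
  obtain ⟨F, hFS, hFfg, hF⟩ := h
  exact ⟨F, hFS.trans hSW, hFfg, hF.trans ht⟩

lemma TQFG.of_le {S W : Submodule R X} (hSW : S ≤ W) (h : TQFG W) (ht : TQT S W) : TQFG S := by
  classical
  obtain ⟨K, hKW, hKfg, hK⟩ := h
  obtain ⟨t, htK⟩ := hKfg
  have key : ∀ κ : X, ∃ Iκ : Ideal R, QIdl Iκ ∧ (κ ∈ W → ∀ a ∈ Iκ, a • κ ∈ S) := by
    intro κ
    by_cases hκ : κ ∈ W
    · obtain ⟨I, hIQ, hI⟩ := ht κ hκ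
      exact ⟨I, hIQ, fun _ => hI⟩
    · exact ⟨⊤, qidl_top, fun h => absurd h hκ⟩
  choose Iid hIQ hI using key
  have htW : ∀ κ ∈ t, κ ∈ W := fun κ hκ => hKW (htK ▸ Submodule.subset_span hκ)
  refine ⟨t.sup fun κ => Submodule.map (LinearMap.toSpanSingleton R X κ) (Iid κ), ?_, ?_, ?_⟩
  · refine Finset.sup_le fun κ hκ => ?_
    rintro y ⟨a, haI, rfl⟩
    simpa using hI κ (htW κ hκ) a haI
  · exact Submodule.fg_finset_sup _ _ fun κ _ => Submodule.FG.map _ (hIQ κ).1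
  · intro x hx
    obtain ⟨I', hI'Q, hI'⟩ := hK x (hSW hx)
    refine ⟨(∏ κ ∈ t, Iid κ) * I', (qidl_prod t Iid fun κ _ => hIQ κ).mul hI'Q, ?_⟩
    have hle : (∏ κ ∈ t, Iid κ) * I' ≤ Submodule.comap (LinearMap.toSpanSingleton R X x)
        (t.sup fun κ => Submodule.map (LinearMap.toSpanSingleton R X κ) (Iid κ)) := by
      rw [Ideal.mul_le]
      intro r hr s hs
      have hspan : Submodule.span R (↑t : Set X) ≤
          Submodule.comap (LinearMap.lsmul R X r)
            (t.sup fun κ => Submodule.map (LinearMap.toSpanSingleton R X κ) (Iid κ)) := by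
        rw [Submodule.span_le]
        intro κ hκ
        simp only [SetLike.mem_coe, Submodule.mem_comap, LinearMap.lsmul_apply]
        have hle' : Submodule.map (LinearMap.toSpanSingleton R X κ) (Iid κ) ≤
            t.sup fun κ => Submodule.map (LinearMap.toSpanSingleton R X κ) (Iid κ) :=
          Finset.le_sup (f := fun κ => Submodule.map (LinearMap.toSpanSingleton R X κ) (Iid κ))
            (Finset.mem_coe.mp hκ)
        exact hle' ⟨r, prod_le_of_mem (Finset.mem_coe.mp hκ) hr, rfl⟩
      have hsx : s • x ∈ K := hI' s hs
      rw [← htK] at hsx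
      have := hspan hsx
      simp only [Submodule.mem_comap, LinearMap.lsmul_apply,
        LinearMap.toSpanSingleton_apply] at this ⊢
      rwa [mul_smul]
    intro a ha
    simpa using hle ha

lemma TQFG.comap' (φ : X →ₗ[R] Y) (hker : TQT (⊥ : Submodule R X) (LinearMap.ker φ))
    {S : Submodule R Y} (hS : S ≤ LinearMap.range φ) (h : TQFG S) : TQFG (S.comap φ) := by
  classical
  obtain ⟨F, hFS, hFfg, hF⟩ := h
  obtain ⟨t, htF⟩ := hFfg
  have htFmem : ∀ y ∈ t, y ∈ F := fun y hy => htF ▸ Submodule.subset_span hy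
  have key : ∀ y : Y, ∃ x : X, y ∈ F → φ x = y := by
    intro y
    by_cases hy : y ∈ F
    · obtain ⟨x, hx⟩ := hS (hFS hy); exact ⟨x, fun _ => hx⟩
    · exact ⟨0, fun h => absurd h hy⟩
  choose pre hpre using key
  set F' := Submodule.span R (pre '' ↑t) with hF'def
  have himg : φ '' (pre '' ↑t) = ↑t := by
    rw [Set.image_image]
    have h1 : ∀ y ∈ (↑t : Set Y), φ (pre y) = y := fun y hy => hpre y (htFmem y hy)
    calc (fun y => φ (pre y)) '' ↑t = id '' ↑t := Set.image_congr h1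
    _ = ↑t := Set.image_id _
  have hmapF : F'.map φ = F := by
    rw [hF'def, Submodule.map_span, himg, htF]
  have hF'le : F' ≤ S.comap φ := by
    rw [hF'def, Submodule.span_le]
    rintro x ⟨y, hyt, rfl⟩
    simp only [SetLike.mem_coe, Submodule.mem_comap]
    rw [hpre y (htFmem y hyt)]
    exact hFS (htFmem y hyt)
  have step1 : TQT (F' ⊔ LinearMap.ker φ) (S.comap φ) := by
    intro x hx
    obtain ⟨I, hIQ, hI⟩ := hF (φ x) hx
    refine ⟨I, hIQ, fun a ha => ?_⟩
    have hmem : φ (a • x) ∈ F'.map φ := by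
      rw [hmapF, map_smul]
      exact hI a ha
    obtain ⟨x', hx'F', hx'⟩ := hmem
    refine Submodule.mem_sup.mpr ⟨x', hx'F', a • x - x', ?_, by abel⟩
    rw [LinearMap.mem_ker, map_sub, hx', sub_self]
  have step2 : TQT F' (F' ⊔ LinearMap.ker φ) := by
    intro z hz
    obtain ⟨u, hu, v, hv, rfl⟩ := Submodule.mem_sup.mp hz
    obtain ⟨I, hIQ, hI⟩ := hker v hv
    refine ⟨I, hIQ, fun a ha => ?_⟩
    have hav : a • v = 0 := by simpa using hI a ha
    rw [smul_add, hav, add_zero]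
    exact Submodule.smul_mem _ a hu
  exact ⟨F', hF'le, Submodule.fg_span ((t : Set Y).toFinite.image pre), step2.trans step1⟩

lemma tqt_range_comp {Z : Type*} [AddCommGroup Z] [Module R Z]
    (φ : X →ₗ[R] Y) (g : Y →ₗ[R] Z)
    (hφ : TQT (LinearMap.range φ) (⊤ : Submodule R Y))
    (hg : TQT (LinearMap.range g) (⊤ : Submodule R Z)) :
    TQT (LinearMap.range (g ∘ₗ φ)) (⊤ : Submodule R Z) := by
  have h1 : TQT (LinearMap.range (g ∘ₗ φ)) (LinearMap.range g) := by
    rintro z ⟨y, rfl⟩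
    obtain ⟨I, hIQ, hI⟩ := hφ y Submodule.mem_top
    refine ⟨I, hIQ, fun a ha => ?_⟩
    obtain ⟨x, hx⟩ := hI a ha
    exact ⟨x, by rw [LinearMap.comp_apply, hx, map_smul]⟩
  exact h1.trans hg

end Aux2

section Aux3
open Pointwise
set_option maxHeartbeats 1000000

variable {R : Type u} [CommRing R]

/-- Kernel of a map from a finite free module to `L` is τ_q-finitely generated,
provided `L` receives a map `χ` from a finite free module with τ_q-f.g. kernel and
Q-torsion cokernel, and the map itself has Q-torsion cokernel. -/
lemma tqfg_ker_free {L : Type*} [AddCommGroup L] [Module R L] {n k : ℕ}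
    (h : (Fin n → R) →ₗ[R] L) (χ : (Fin k → R) →ₗ[R] L)
    (hkerχ : TQFG (LinearMap.ker χ))
    (hcokχ : TQT (LinearMap.range χ) (⊤ : Submodule R L))
    (hcokh : TQT (LinearMap.range h) (⊤ : Submodule R L)) :
    TQFG (LinearMap.ker h) := by
  classical
  set e := Pi.basisFun R (Fin n) with he
  set e' := Pi.basisFun R (Fin k) with he'
  -- ideal I₀ moving each h (e i) into range χ
  have hIi : ∀ i : Fin n, ∃ I : Ideal R, QIdl I ∧ ∀ a ∈ I, a • h (e i) ∈ LinearMap.range χ :=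
    fun i => hcokχ (h (e i)) Submodule.mem_top
  choose Ii hIiQ hIi' using hIi
  set I₀ : Ideal R := ∏ i ∈ Finset.univ, Ii i with hI₀def
  have hI₀Q : QIdl I₀ := qidl_prod _ _ fun i _ => hIiQ i
  have hI₀ : ∀ a ∈ I₀, ∀ i, a • h (e i) ∈ LinearMap.range χ :=
    fun a ha i => hIi' i a (prod_le_of_mem (Finset.mem_univ i) ha)
  obtain ⟨t, htI₀⟩ := hI₀Q.1
  have htI₀mem : ∀ a ∈ t, a ∈ I₀ := fun a ha => htI₀ ▸ Ideal.subset_span ha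
  -- ideal Λ₀ moving each χ (e' s) into range h
  have hΛi : ∀ s : Fin k, ∃ I : Ideal R, QIdl I ∧ ∀ b ∈ I, b • χ (e' s) ∈ LinearMap.range h :=
    fun s => hcokh (χ (e' s)) Submodule.mem_top
  choose Λi hΛiQ hΛi' using hΛi
  set Λ₀ : Ideal R := ∏ s ∈ Finset.univ, Λi s with hΛ₀def
  have hΛ₀Q : QIdl Λ₀ := qidl_prod _ _ fun s _ => hΛiQ s
  have hΛ₀ : ∀ b ∈ Λ₀, ∀ s, b • χ (e' s) ∈ LinearMap.range h :=
    fun b hb s => hΛi' s b (prod_le_of_mem (Finset.mem_univ s) hb)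
  obtain ⟨t', ht'Λ₀⟩ := hΛ₀Q.1
  have ht'Λ₀mem : ∀ b ∈ t', b ∈ Λ₀ := fun b hb => ht'Λ₀ ▸ Ideal.subset_span hb
  -- partial lifts σ a of a • h through χ
  have hz : ∀ (a : R) (i : Fin n), ∃ z : Fin k → R, a ∈ I₀ → χ z = a • h (e i) := by
    intro a i
    by_cases ha : a ∈ I₀
    · obtain ⟨z, hz⟩ := hI₀ a ha i; exact ⟨z, fun _ => hz⟩
    · exact ⟨0, fun h => absurd h ha⟩
  choose z hzz using hz
  set σ : R → ((Fin n → R) →ₗ[R] (Fin k → R)) := fun a => e.constr ℕ (z a) with hσdef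
  have hσ : ∀ a ∈ I₀, χ ∘ₗ σ a = a • h := by
    intro a ha
    apply e.ext
    intro i
    simp only [LinearMap.comp_apply, hσdef, Module.Basis.constr_basis, LinearMap.smul_apply]
    exact hzz a i ha
  -- partial lifts σ' b of b • χ through h
  have hw : ∀ (b : R) (s : Fin k), ∃ w : Fin n → R, b ∈ Λ₀ → h w = b • χ (e' s) := by
    intro b s
    by_cases hb : b ∈ Λ₀
    · obtain ⟨w, hw⟩ := hΛ₀ b hb s; exact ⟨w, fun _ => hw⟩
    · exact ⟨0, fun h => absurd h hb⟩
  choose w hww using hw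
  set σ' : R → ((Fin k → R) →ₗ[R] (Fin n → R)) := fun b => e'.constr ℕ (w b) with hσ'def
  have hσ' : ∀ b ∈ Λ₀, h ∘ₗ σ' b = b • χ := by
    intro b hb
    apply e'.ext
    intro s
    simp only [LinearMap.comp_apply, hσ'def, Module.Basis.constr_basis, LinearMap.smul_apply]
    exact hww b s hb
  -- the endomorphisms θ
  set θ : R → R → ((Fin n → R) →ₗ[R] (Fin n → R)) :=
    fun a b => (a * b) • LinearMap.id - (σ' b) ∘ₗ (σ a) with hθdef
  have hθ : ∀ a ∈ I₀, ∀ b ∈ Λ₀, h ∘ₗ θ a b = 0 := by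
    intro a ha b hb
    apply LinearMap.ext
    intro v
    simp only [hθdef, LinearMap.comp_apply, LinearMap.sub_apply, LinearMap.smul_apply,
      LinearMap.id_apply, LinearMap.zero_apply, map_sub, map_smul]
    have h1 : h (σ' b (σ a v)) = b • χ (σ a v) := LinearMap.congr_fun (hσ' b hb) (σ a v)
    have h2 : χ (σ a v) = a • h v := LinearMap.congr_fun (hσ a ha) v
    rw [h1, h2, mul_smul, smul_comm a b, sub_self]
  obtain ⟨F, hFker, hFfg, hF⟩ := hkerχ
  set G : Submodule R (Fin n → R) :=
    (t.sup fun a => t'.sup fun b => LinearMap.range (θ a b)) ⊔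
      (t'.sup fun b => F.map (σ' b)) with hGdef
  have hGfg : G.FG := by
    refine Submodule.FG.sup ?_ ?_
    · refine Submodule.fg_finset_sup _ _ fun a _ => ?_
      refine Submodule.fg_finset_sup _ _ fun b _ => ?_
      have : (⊤ : Submodule R (Fin n → R)).FG := Module.Finite.fg_top
      have := Submodule.FG.map (θ a b) this
      rwa [Submodule.map_top] at this
    · exact Submodule.fg_finset_sup _ _ fun b _ => Submodule.FG.map _ hFfg
  have hGker : G ≤ LinearMap.ker h := by
    refine sup_le ?_ ?_
    · refine Finset.sup_le fun a ha => Finset.sup_le fun b hb => ?_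
      rw [LinearMap.range_le_ker_iff]
      exact hθ a (htI₀mem a ha) b (ht'Λ₀mem b hb)
    · refine Finset.sup_le fun b hb => ?_
      rintro y ⟨u, huF, rfl⟩
      rw [LinearMap.mem_ker]
      have := LinearMap.congr_fun (hσ' b (ht'Λ₀mem b hb)) u
      rw [LinearMap.comp_apply] at this
      rw [this, LinearMap.smul_apply]
      have : χ u = 0 := hFker huF
      rw [this, smul_zero]
  refine ⟨G, hGker, hGfg, ?_⟩
  intro x hx
  have hσx : ∀ a ∈ I₀, σ a x ∈ LinearMap.ker χ := by
    intro a ha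
    rw [LinearMap.mem_ker]
    have := LinearMap.congr_fun (hσ a ha) x
    rw [LinearMap.comp_apply] at this
    rw [this, LinearMap.smul_apply, LinearMap.mem_ker.mp hx, smul_zero]
  have key : ∀ a : R, ∃ Ja : Ideal R, QIdl Ja ∧ (a ∈ I₀ → ∀ c ∈ Ja, c • σ a x ∈ F) := by
    intro a
    by_cases ha : a ∈ I₀
    · obtain ⟨Ja, hJaQ, hJa⟩ := hF (σ a x) (hσx a ha)
      exact ⟨Ja, hJaQ, fun _ => hJa⟩
    · exact ⟨⊤, qidl_top, fun h => absurd h ha⟩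
  choose J hJQ hJ using key
  refine ⟨(∏ a ∈ t, J a) * (I₀ * Λ₀),
    (qidl_prod t J fun a _ => hJQ a).mul (hI₀Q.mul hΛ₀Q), ?_⟩
  have hle : (∏ a ∈ t, J a) * (I₀ * Λ₀) ≤
      Submodule.comap (LinearMap.toSpanSingleton R (Fin n → R) x) G := by
    rw [Ideal.mul_le]
    intro r hr s hs
    rw [← htI₀, ← ht'Λ₀, Ideal.span_mul_span'] at hs
    have hs' : s ∈ Ideal.span ((t : Set R) * (t' : Set R)) := hs
    have hspan : Ideal.span ((t : Set R) * (t' : Set R)) ≤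
        Submodule.comap (LinearMap.toSpanSingleton R (Fin n → R) (r • x)) G := by
      rw [Ideal.span_le]
      intro c hc
      obtain ⟨a, hat, b, hbt, rfl⟩ := Set.mem_mul.mp hc
      simp only [SetLike.mem_coe, Submodule.mem_comap, LinearMap.toSpanSingleton_apply]
      have haI : a ∈ I₀ := htI₀mem a hat
      have hbΛ : b ∈ Λ₀ := ht'Λ₀mem b hbt
      have hdecomp : (a * b) • (r • x) = θ a b (r • x) + σ' b (r • σ a x) := by
        have hθapp : θ a b (r • x) = (a * b) • (r • x) - σ' b (σ a (r • x)) := by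
          simp only [hθdef, LinearMap.sub_apply, LinearMap.smul_apply, LinearMap.id_apply,
            LinearMap.comp_apply]
        rw [hθapp, map_smul (σ a), sub_add_cancel]
      rw [hdecomp, hGdef]
      refine Submodule.add_mem _ ?_ ?_
      · have hmem : θ a b (r • x) ∈ LinearMap.range (θ a b) := LinearMap.mem_range_self _ _
        have hle1 : LinearMap.range (θ a b) ≤ t'.sup fun b => LinearMap.range (θ a b) :=
          Finset.le_sup (f := fun b => LinearMap.range (θ a b)) (Finset.mem_coe.mp hbt)
        have hle2 : (t'.sup fun b => LinearMap.range (θ a b)) ≤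
            t.sup fun a => t'.sup fun b => LinearMap.range (θ a b) :=
          Finset.le_sup (f := fun a => t'.sup fun b => LinearMap.range (θ a b))
            (Finset.mem_coe.mp hat)
        exact Submodule.mem_sup_left (hle2 (hle1 hmem))
      · have hrF : r • σ a x ∈ F := hJ a haI r (prod_le_of_mem (Finset.mem_coe.mp hat) hr)
        have hle' : F.map (σ' b) ≤ t'.sup fun b => F.map (σ' b) :=
          Finset.le_sup (f := fun b => F.map (σ' b)) (Finset.mem_coe.mp hbt)
        exact Submodule.mem_sup_right (hle' ⟨_, hrF, rfl⟩)
    have := hspan hs'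
    simp only [Submodule.mem_comap, LinearMap.toSpanSingleton_apply] at this ⊢
    rwa [mul_comm, mul_smul]
  intro a ha
  simpa using hle ha

end Aux3

/-- Let `0 → M → N → L → 0` be a τ_q-exact sequence (i.e. `ker f`, `L/im g`,
`(im f + ker g)/im f` and `(im f + ker g)/ker g` are all Q-torsion) with `N`
τ_q-finitely presented.  Then `L` is τ_q-finitely presented if and only if `M` is
τ_q-finitely generated. -/
theorem statement6 (R : Type u) [CommRing R]
    (M : Type v) [AddCommGroup M] [Module R M]
    (N : Type v) [AddCommGroup N] [Module R N]
    (L : Type v) [AddCommGroup L] [Module R L]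
    (f : M →ₗ[R] N) (g : N →ₗ[R] L)
    (h1 : IsQTorsion R (LinearMap.ker f))
    (h2 : IsQTorsion R (L ⧸ LinearMap.range g))
    (h3 : IsQTorsion R (↥(LinearMap.range f ⊔ LinearMap.ker g) ⧸
      Submodule.comap (LinearMap.range f ⊔ LinearMap.ker g).subtype (LinearMap.range f)))
    (h4 : IsQTorsion R (↥(LinearMap.range f ⊔ LinearMap.ker g) ⧸
      Submodule.comap (LinearMap.range f ⊔ LinearMap.ker g).subtype (LinearMap.ker g)))
    (hN : IsTauQFP R N) :
    IsTauQFP R L ↔ IsTauQFG R M := by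
  classical
  obtain ⟨P, _, _, ψ, hPfp, hkψ, hcψ⟩ := hN
  haveI := hPfp
  have h1' : TQT (⊥ : Submodule R M) (LinearMap.ker f) := tqt_bot_iff.mpr h1
  have h2' : TQT (LinearMap.range g) (⊤ : Submodule R L) := tqt_top_iff.mpr h2
  have h3' : TQT (LinearMap.range f) (LinearMap.range f ⊔ LinearMap.ker g) := tqt_of_subQuot h3
  have h4' : TQT (LinearMap.ker g) (LinearMap.range f ⊔ LinearMap.ker g) := tqt_of_subQuot h4
  have hkψ' : TQT (⊥ : Submodule R P) (LinearMap.ker ψ) := tqt_bot_iff.mpr hkψ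
  have hcψ' : TQT (LinearMap.range ψ) (⊤ : Submodule R N) := tqt_top_iff.mpr hcψ
  have hgψ : TQT (LinearMap.range (g ∘ₗ ψ)) (⊤ : Submodule R L) := tqt_range_comp ψ g hcψ' h2'
  -- torsion comparison of ker g and ker g ⊓ range ψ
  have hBB' : TQT (LinearMap.ker g ⊓ LinearMap.range ψ) (LinearMap.ker g) := by
    intro x hx
    obtain ⟨I, hIQ, hI⟩ := hcψ' x Submodule.mem_top
    exact ⟨I, hIQ, fun a ha => ⟨Submodule.smul_mem _ a hx, hI a ha⟩⟩
  have hcomapinf : (LinearMap.ker g ⊓ LinearMap.range ψ).comap ψ = LinearMap.ker (g ∘ₗ ψ) := by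
    rw [Submodule.comap_inf, ← LinearMap.ker_comp]
    have h5 : (LinearMap.range ψ).comap ψ = ⊤ :=
      Submodule.eq_top_iff'.mpr fun x => ⟨x, rfl⟩
    rw [h5, inf_top_eq]
  have keyM : IsTauQFG R M ↔ TQFG (LinearMap.ker g) := by
    constructor
    · intro hM
      have h0 : TQFG (⊤ : Submodule R M) := tqfg_top_iff.mpr hM
      have hA : TQFG (LinearMap.range f) := by
        have := h0.map f
        rwa [Submodule.map_top] at this
      have hW : TQFG (LinearMap.range f ⊔ LinearMap.ker g) := hA.up le_sup_left h3'
      exact TQFG.of_le le_sup_right hW h4'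
    · intro hB
      have hW : TQFG (LinearMap.range f ⊔ LinearMap.ker g) := hB.up le_sup_right h4'
      have hA : TQFG (LinearMap.range f) := TQFG.of_le le_sup_left hW h3'
      have hT : TQFG ((LinearMap.range f).comap f) := TQFG.comap' f h1' le_rfl hA
      have h5 : (LinearMap.range f).comap f = ⊤ :=
        Submodule.eq_top_iff'.mpr fun x => ⟨x, rfl⟩
      rw [h5] at hT
      exact tqfg_top_iff.mp hT
  have keyL : IsTauQFP R L ↔ TQFG (LinearMap.ker g) := by
    constructor
    · rintro ⟨Q', _, _, χ, hQfp, hkχ, hcχ⟩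
      haveI := hQfp
      obtain ⟨n, π, hπs⟩ := Module.Finite.exists_fin' R P
      obtain ⟨k, π', hπ's⟩ := Module.Finite.exists_fin' R Q'
      have hπ'k : (LinearMap.ker π').FG := Module.FinitePresentation.fg_ker π' hπ's
      -- hypotheses of tqfg_ker_free
      have hkχ' : TQFG (LinearMap.ker (χ ∘ₗ π')) := by
        refine ⟨LinearMap.ker π', ?_, hπ'k, ?_⟩
        · intro x hx
          rw [LinearMap.mem_ker] at hx ⊢
          rw [LinearMap.comp_apply, hx, map_zero]
        · intro x hx
          rw [LinearMap.ker_comp] at hx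
          obtain ⟨I, hIQ, hI⟩ := (tqt_bot_iff.mpr hkχ) (π' x) hx
          refine ⟨I, hIQ, fun a ha => ?_⟩
          have := hI a ha
          rw [Submodule.mem_bot] at this
          rw [LinearMap.mem_ker, map_smul, this]
      have hcχ'' : TQT (LinearMap.range (χ ∘ₗ π')) (⊤ : Submodule R L) := by
        have h5 : LinearMap.range (χ ∘ₗ π') = LinearMap.range χ := by
          rw [LinearMap.range_comp, LinearMap.range_eq_top.mpr hπ's, Submodule.map_top]
        rw [h5]
        exact tqt_top_iff.mpr hcχ
      have hch : TQT (LinearMap.range ((g ∘ₗ ψ) ∘ₗ π)) (⊤ : Submodule R L) := by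
        have h5 : LinearMap.range ((g ∘ₗ ψ) ∘ₗ π) = LinearMap.range (g ∘ₗ ψ) := by
          rw [LinearMap.range_comp, LinearMap.range_eq_top.mpr hπs, Submodule.map_top]
        rw [h5]
        exact hgψ
      have hker := tqfg_ker_free ((g ∘ₗ ψ) ∘ₗ π) (χ ∘ₗ π') hkχ' hcχ'' hch
      have h5 : TQFG (LinearMap.ker (g ∘ₗ ψ)) := by
        have := hker.map π
        rwa [LinearMap.ker_comp π (g ∘ₗ ψ), Submodule.map_comap_eq_of_surjective hπs] at this
      have h6 : TQFG (LinearMap.ker g ⊓ LinearMap.range ψ) := by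
        have := h5.map ψ
        rwa [LinearMap.ker_comp ψ g, Submodule.map_comap_eq, inf_comm] at this
      exact h6.up inf_le_left hBB'
    · intro hB
      have hB' : TQFG (LinearMap.ker g ⊓ LinearMap.range ψ) :=
        TQFG.of_le inf_le_left hB hBB'
      have hT : TQFG ((LinearMap.ker g ⊓ LinearMap.range ψ).comap ψ) :=
        TQFG.comap' ψ hkψ' inf_le_right hB'
      rw [hcomapinf] at hT
      obtain ⟨T₀, hT₀le, hT₀fg, hT₀⟩ := hT
      have hT₀ker : T₀ ≤ LinearMap.ker (g ∘ₗ ψ) := hT₀le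
      haveI : Module.FinitePresentation R (P ⧸ T₀) :=
        Module.finitePresentation_of_surjective T₀.mkQ (Submodule.mkQ_surjective T₀)
          (by rwa [Submodule.ker_mkQ])
      refine ⟨P ⧸ T₀, inferInstance, inferInstance, T₀.liftQ (g ∘ₗ ψ) hT₀ker,
        ‹Module.FinitePresentation R (P ⧸ T₀)›, ?_, ?_⟩
      · apply tqt_bot_iff.mp
        rw [Submodule.ker_liftQ]
        rintro xx ⟨x, hx, rfl⟩
        obtain ⟨I, hIQ, hI⟩ := hT₀ x hx
        refine ⟨I, hIQ, fun a ha => ?_⟩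
        rw [Submodule.mem_bot, ← map_smul, Submodule.mkQ_apply, Submodule.Quotient.mk_eq_zero]
        exact hI a ha
      · apply tqt_top_iff.mp
        rw [Submodule.range_liftQ]
        exact hgψ
  exact keyL.trans keyM.symm
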